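/- Let R be a commutative ring with unit of characteristic zero. Let I be the set of prime numbers p such that R is uniquely p-divisible (i.e., the map x ↦ p•x is a bijection of R), and let S = ℤ[I⁻¹] be the localization of the integers at the multiplicative submonoid generated by I. Then an integer k is invertible (a unit) in R if and only if the image of k in S is invertible. -/

import Mathlib

/-- The set of integers `p` that are (the images of) prime numbers such that `R` is
uniquely `p`-divisible, i.e. the map `x ↦ p • x` is a bijection of `R`. -/
def uniquelyDivisiblePrimes (R : Type*) [CommRing R] : Set ℤ :=
  (fun p : ℕ => (p : ℤ)) '' {p : ℕ | p.Prime ∧ Function.Bijective fun x : R => p • x}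

/-- Let `R` be a commutative ring with unit of characteristic zero, `I` the set of primes
`p` such that `R` is uniquely `p`-divisible, and `S = ℤ[I⁻¹]` the localization of `ℤ` at
the multiplicative submonoid generated by `I`.  Then an integer `k` is invertible in `R`
if and only if its image in `S` is invertible. -/
theorem int_isUnit_iff_isUnit_localization (R : Type*) [CommRing R] [CharP R 0] (k : ℤ) :
    IsUnit (k : R) ↔
      IsUnit (algebraMap ℤ
        (Localization (Submonoid.closure (uniquelyDivisiblePrimes R))) k) := by
  haveI : CharZero R := CharP.charP_to_charZero R
  set M := Submonoid.closure (uniquelyDivisiblePrimes R) with hM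
  set S := Localization M
  -- every element of M is a unit in R
  have hMunit : ∀ m : ℤ, m ∈ M → IsUnit (m : R) := by
    intro m hm
    refine Submonoid.closure_induction (fun x hx => ?_) (by simp) ?_ hm
    · obtain ⟨p, ⟨hp, hb⟩, rfl⟩ := hx
      obtain ⟨x, hx⟩ := hb.surjective 1
      simp only [nsmul_eq_mul] at hx
      refine IsUnit.of_mul_eq_one x ?_
      push_cast
      exact hx
    · intro x y _ _ hx hy
      push_cast
      exact hx.mul hy
  have hle : M ≤ nonZeroDivisors ℤ := by
    rw [hM, Submonoid.closure_le]
    rintro _ ⟨p, ⟨hp, -⟩, rfl⟩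
    exact mem_nonZeroDivisors_of_ne_zero (by simpa using Int.natCast_ne_zero.mpr hp.ne_zero)
  constructor
  · intro hk
    have hk0 : k ≠ 0 := by
      rintro rfl
      simp only [Int.cast_zero] at hk
      exact not_isUnit_zero hk
    have hn : (k.natAbs : ℤ) ∈ M := by
      have heq : (k.natAbs : ℤ) = (k.natAbs.primeFactorsList.map (Nat.cast : ℕ → ℤ)).prod := by
        rw [← Nat.cast_list_prod, Nat.prod_primeFactorsList (Int.natAbs_ne_zero.mpr hk0)]
      rw [heq]
      refine Submonoid.list_prod_mem _ ?_
      intro x hx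
      simp only [List.mem_map] at hx
      obtain ⟨p, hp, rfl⟩ := hx
      have hpp := Nat.prime_of_mem_primeFactorsList hp
      have hpd : (p : ℤ) ∣ k :=
        Int.dvd_natAbs.mp (Int.natCast_dvd_natCast.mpr (Nat.dvd_of_mem_primeFactorsList hp))
      have hpu : IsUnit ((p : ℤ) : R) := isUnit_of_dvd_unit (Int.cast_dvd_cast (α := R) _ _ hpd) hk
      refine Submonoid.subset_closure ⟨p, ⟨hpp, ?_⟩, rfl⟩
      have : (fun x : R => p • x) = fun x : R => ((p : ℤ) : R) * x := by
        funext x; push_cast [nsmul_eq_mul]; ring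
      rw [this]
      exact (Units.mulLeft_bijective hpu.unit)
    have h1 : IsUnit (algebraMap ℤ S (k.natAbs : ℤ)) :=
      IsLocalization.map_units S (⟨_, hn⟩ : M)
    have hsk : k = k.sign * k.natAbs := (Int.sign_mul_natAbs k).symm
    rw [hsk, map_mul]
    have hsgn : IsUnit k.sign := by
      rcases hk0.lt_or_gt with h | h
      · exact Int.isUnit_iff.mpr (Or.inr (Int.sign_eq_neg_one_iff_neg.mpr h))
      · exact Int.isUnit_iff.mpr (Or.inl (Int.sign_eq_one_iff_pos.mpr h))
    exact (hsgn.map (algebraMap ℤ S)).mul h1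
  · intro hk
    obtain ⟨u, hu⟩ := hk
    obtain ⟨⟨a, s⟩, hs⟩ := IsLocalization.surj M ((u⁻¹ : Sˣ) : S)
    have key : algebraMap ℤ S (k * a) = algebraMap ℤ S (s : ℤ) := by
      rw [map_mul, ← hu, ← hs]
      simp only [← mul_assoc]
      rw [Units.mul_inv, one_mul]
    have hka : k * a = (s : ℤ) := IsLocalization.injective S hle key
    have hsu : IsUnit (((s : ℤ)) : R) := hMunit _ s.2
    rw [← hka] at hsu
    push_cast at hsu
    exact isUnit_of_mul_isUnit_left hsu
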